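/- Let ℓ be a prime and G an open subgroup of GL₂(ℤ_ℓ). For m ≥ 1 let i_m denote the index of the image of G in GL₂(ℤ/ℓ^mℤ). If i_{n+1} = i_n for some integer n ≥ 1, with n ≠ 1 if ℓ = 2, then the index [GL₂(ℤ_ℓ) : G] equals i_n. -/

import Mathlib

open PadicInt Matrix Filter Pointwise

section SZ37

variable (ℓ : ℕ) [Fact ℓ.Prime]

noncomputable abbrev redGL (m : ℕ) : GL (Fin 2) ℤ_[ℓ] →* GL (Fin 2) (ZMod (ℓ ^ m)) :=
  Units.map ((PadicInt.toZModPow (p := ℓ) m).mapMatrix.toMonoidHom)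

noncomputable abbrev Kgl (m : ℕ) : Subgroup (GL (Fin 2) ℤ_[ℓ]) := (redGL ℓ m).ker

theorem dvd_iff_toZModPow (m : ℕ) (z : ℤ_[ℓ]) :
    (ℓ : ℤ_[ℓ]) ^ m ∣ z ↔ toZModPow (p := ℓ) m z = 0 := by
  rw [← Ideal.mem_span_singleton, ← PadicInt.ker_toZModPow, RingHom.mem_ker]

theorem mem_Kgl_iff (m : ℕ) (x : GL (Fin 2) ℤ_[ℓ]) :
    x ∈ Kgl ℓ m ↔ ∀ i j, (ℓ : ℤ_[ℓ]) ^ m ∣ ((x : Matrix (Fin 2) (Fin 2) ℤ_[ℓ]) - 1) i j := by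
  rw [MonoidHom.mem_ker, Units.ext_iff]
  have : (↑((redGL ℓ m) x) : Matrix (Fin 2) (Fin 2) (ZMod (ℓ ^ m)))
      = (x : Matrix (Fin 2) (Fin 2) ℤ_[ℓ]).map (toZModPow m) := rfl
  rw [this]
  constructor
  · intro hx i j
    rw [dvd_iff_toZModPow]
    have := congrFun (congrFun hx i) j
    simp only [Matrix.map_apply] at this
    rw [Matrix.sub_apply, map_sub, this]
    rcases eq_or_ne i j with rfl | hij
    · simp [Matrix.one_apply]
    · simp [Matrix.one_apply, hij]
  · intro hx
    ext i j
    have := hx i j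
    rw [dvd_iff_toZModPow, Matrix.sub_apply, map_sub, sub_eq_zero] at this
    simp only [Matrix.map_apply, this]
    rcases eq_or_ne i j with rfl | hij
    · simp [Matrix.one_apply]
    · simp [Matrix.one_apply, hij]

theorem Kgl_antitone {m m' : ℕ} (hm : m ≤ m') : Kgl ℓ m' ≤ Kgl ℓ m := by
  intro x hx
  rw [mem_Kgl_iff] at hx ⊢
  exact fun i j => dvd_trans (pow_dvd_pow _ hm) (hx i j)

theorem isUnit_of_toZModPow {m : ℕ} (hm : 1 ≤ m) {z : ℤ_[ℓ]}
    (hz : IsUnit (toZModPow (p := ℓ) m z)) : IsUnit z := by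
  by_contra hu
  have hz' : z ∈ Ideal.span {(ℓ : ℤ_[ℓ])} := by
    rw [← PadicInt.maximalIdeal_eq_span_p]; exact hu
  obtain ⟨y, rfl⟩ := Ideal.mem_span_singleton.mp hz'
  rw [_root_.map_mul, map_natCast] at hz
  have hℓ : IsUnit ((ℓ : ZMod (ℓ ^ m))) := isUnit_of_mul_isUnit_left hz
  rw [ZMod.isUnit_iff_coprime] at hℓ
  have hp := Fact.out (p := ℓ.Prime)
  have h1 : ℓ ∣ ℓ ^ m := dvd_pow_self ℓ (by omega)
  have h2 : ℓ ∣ Nat.gcd ℓ (ℓ ^ m) := Nat.dvd_gcd dvd_rfl h1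
  rw [Nat.Coprime] at hℓ
  exact hp.ne_one (Nat.dvd_one.mp (hℓ ▸ h2))

theorem redGL_surjective (m : ℕ) (hm : 1 ≤ m) :
    Function.Surjective (redGL ℓ m) := by
  intro U
  have hsurj : Function.Surjective (toZModPow (p := ℓ) m) := by
    intro z
    refine ⟨((z.val : ℕ) : ℤ_[ℓ]), ?_⟩
    rw [map_natCast, ZMod.natCast_val, ZMod.cast_id]
  choose B hB using fun i j => hsurj ((U : Matrix (Fin 2) (Fin 2) (ZMod (ℓ ^ m))) i j)
  set M : Matrix (Fin 2) (Fin 2) ℤ_[ℓ] := Matrix.of B with hM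
  have hmap : (toZModPow (p := ℓ) m).mapMatrix M = (U : Matrix (Fin 2) (Fin 2) (ZMod (ℓ ^ m))) := by
    ext i j; exact hB i j
  have hdet : IsUnit M.det := by
    apply isUnit_of_toZModPow ℓ hm
    rw [RingHom.map_det, hmap]
    exact U.isUnit.map Matrix.detMonoidHom
  obtain ⟨V, hV⟩ := (Matrix.isUnit_iff_isUnit_det M).mpr hdet
  refine ⟨V, ?_⟩
  ext : 1
  show (toZModPow (p := ℓ) m).mapMatrix V.val = _
  rw [hV, hmap]

/-! ### Topology: some `Kgl m` is contained in any open subgroup -/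

theorem norm_le_of_dvd {m : ℕ} {z : ℤ_[ℓ]} (hz : (ℓ : ℤ_[ℓ]) ^ m ∣ z) :
    ‖z‖ ≤ (ℓ : ℝ) ^ (-(m:ℤ)) :=
  (PadicInt.norm_le_pow_iff_mem_span_pow z m).mpr
    (Ideal.mem_span_singleton.mpr (by simpa using hz))

theorem tendsto_of_dvd (A : ℕ → Matrix (Fin 2) (Fin 2) ℤ_[ℓ])
    (hA : ∀ m i j, (ℓ : ℤ_[ℓ]) ^ m ∣ (A m - 1) i j) :
    Tendsto A atTop (nhds (1 : Matrix (Fin 2) (Fin 2) ℤ_[ℓ])) := by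
  rw [show (nhds (1 : Matrix (Fin 2) (Fin 2) ℤ_[ℓ])) =
    (nhds ((1 : Matrix (Fin 2) (Fin 2) ℤ_[ℓ]) : Fin 2 → Fin 2 → ℤ_[ℓ])) from rfl]
  change @Tendsto ℕ (Fin 2 → Fin 2 → ℤ_[ℓ]) A atTop
    (@nhds (Fin 2 → Fin 2 → ℤ_[ℓ]) _ (1 : Matrix (Fin 2) (Fin 2) ℤ_[ℓ]))
  refine tendsto_pi_nhds.mpr ?_
  intro i
  rw [tendsto_pi_nhds]
  intro j
  rw [tendsto_iff_dist_tendsto_zero]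
  have hp := Fact.out (p := ℓ.Prime)
  apply squeeze_zero (fun m => dist_nonneg) (g := fun m => ((ℓ:ℝ)⁻¹) ^ m)
  · intro m
    have := norm_le_of_dvd ℓ (hA m i j)
    rw [Matrix.sub_apply] at this
    rw [dist_eq_norm]
    calc ‖A m i j - (1 : Matrix (Fin 2) (Fin 2) ℤ_[ℓ]) i j‖ ≤ (ℓ : ℝ) ^ (-(m:ℤ)) := this
    _ = ((ℓ:ℝ)⁻¹) ^ m := by
        rw [_root_.zpow_neg, inv_pow, zpow_natCast]
  · apply tendsto_pow_atTop_nhds_zero_of_lt_one (by positivity)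
    rw [inv_lt_one_iff₀]
    right
    exact_mod_cast hp.one_lt

theorem exists_Kgl_le (G : Subgroup (GL (Fin 2) ℤ_[ℓ]))
    (hG : IsOpen (G : Set (GL (Fin 2) ℤ_[ℓ]))) : ∃ m, Kgl ℓ m ≤ G := by
  by_contra hc
  push_neg at hc
  simp only [SetLike.not_le_iff_exists] at hc
  choose x hx hxG using hc
  have h1 : Tendsto (fun m => ((x m : Matrix (Fin 2) (Fin 2) ℤ_[ℓ]))) atTop (nhds 1) :=
    tendsto_of_dvd ℓ _ (fun m => (mem_Kgl_iff ℓ m (x m)).mp (hx m))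
  have h2 : Tendsto (fun m => (((x m)⁻¹ : GL (Fin 2) ℤ_[ℓ]) : Matrix (Fin 2) (Fin 2) ℤ_[ℓ]))
      atTop (nhds 1) :=
    tendsto_of_dvd ℓ _ (fun m => (mem_Kgl_iff ℓ m (x m)⁻¹).mp (inv_mem (hx m)))
  have hT : Tendsto x atTop (nhds 1) := by
    rw [Units.isInducing_embedProduct.tendsto_nhds_iff]
    have : Units.embedProduct _ (1 : GL (Fin 2) ℤ_[ℓ]) = (1, MulOpposite.op 1) :=
      map_one _
    rw [this, nhds_prod_eq]
    exact Filter.Tendsto.prodMk h1 ((MulOpposite.continuous_op.tendsto _).comp h2)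
  obtain ⟨m, hm⟩ := (hT.eventually_mem (hG.mem_nhds G.one_mem)).exists
  exact hxG m hm

/-! ### entrywise divisibility machinery -/


/-- entrywise divisibility by `ℓ^k` -/
def EDvd (k : ℕ) (M : Matrix (Fin 2) (Fin 2) ℤ_[ℓ]) : Prop :=
  ∀ i j, (ℓ : ℤ_[ℓ]) ^ k ∣ M i j

theorem EDvd.exists_smul {k : ℕ} {M : Matrix (Fin 2) (Fin 2) ℤ_[ℓ]} (h : EDvd ℓ k M) :
    ∃ C, M = (ℓ : ℤ_[ℓ]) ^ k • C := by
  choose C hC using h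
  exact ⟨Matrix.of C, by ext i j; simpa using hC i j⟩

theorem edvd_smul {k : ℕ} {c : ℤ_[ℓ]} (hc : (ℓ : ℤ_[ℓ]) ^ k ∣ c)
    (M : Matrix (Fin 2) (Fin 2) ℤ_[ℓ]) : EDvd ℓ k (c • M) :=
  fun i j => by simpa using Dvd.dvd.mul_right hc (M i j)

theorem EDvd.add {k : ℕ} {M N : Matrix (Fin 2) (Fin 2) ℤ_[ℓ]} (hM : EDvd ℓ k M)
    (hN : EDvd ℓ k N) : EDvd ℓ k (M + N) := fun i j => by
  simpa using dvd_add (hM i j) (hN i j)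

theorem EDvd.sub {k : ℕ} {M N : Matrix (Fin 2) (Fin 2) ℤ_[ℓ]} (hM : EDvd ℓ k M)
    (hN : EDvd ℓ k N) : EDvd ℓ k (M - N) := fun i j => by
  simpa using dvd_sub (hM i j) (hN i j)

theorem EDvd.mul_left {k : ℕ} (M : Matrix (Fin 2) (Fin 2) ℤ_[ℓ])
    {N : Matrix (Fin 2) (Fin 2) ℤ_[ℓ]} (hN : EDvd ℓ k N) : EDvd ℓ k (M * N) := fun i j => by
  rw [Matrix.mul_apply]
  exact Finset.dvd_sum fun l _ => Dvd.dvd.mul_left (hN l j) _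

theorem EDvd.mul_right {k : ℕ} {M : Matrix (Fin 2) (Fin 2) ℤ_[ℓ]}
    (hM : EDvd ℓ k M) (N : Matrix (Fin 2) (Fin 2) ℤ_[ℓ]) : EDvd ℓ k (M * N) := fun i j => by
  rw [Matrix.mul_apply]
  exact Finset.dvd_sum fun l _ => Dvd.dvd.mul_right (hM i l) _

theorem EDvd.mono {k k' : ℕ} (hk : k' ≤ k) {M : Matrix (Fin 2) (Fin 2) ℤ_[ℓ]}
    (hM : EDvd ℓ k M) : EDvd ℓ k' M := fun i j =>
  dvd_trans (pow_dvd_pow _ hk) (hM i j)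

theorem EDvd.sum {k : ℕ} {s : Finset ℕ} {F : ℕ → Matrix (Fin 2) (Fin 2) ℤ_[ℓ]}
    (hF : ∀ t ∈ s, EDvd ℓ k (F t)) : EDvd ℓ k (∑ t ∈ s, F t) := fun i j => by
  rw [Matrix.sum_apply]
  exact Finset.dvd_sum fun t ht => hF t ht i j

theorem edvd_natCast_mul_smul {C : ℕ} {c : ℤ_[ℓ]} (M : Matrix (Fin 2) (Fin 2) ℤ_[ℓ]) :
    (c • M) * (C : Matrix (Fin 2) (Fin 2) ℤ_[ℓ]) = ((C : ℤ_[ℓ]) * c) • M := by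
  rw [← (Nat.cast_commute C ((c • M))).eq, ← nsmul_eq_mul, ← Nat.cast_smul_eq_nsmul ℤ_[ℓ],
    smul_smul]

theorem binom_key {m : ℕ} (hm : 1 ≤ m) (h2 : ℓ = 2 → 2 ≤ m) (A : Matrix (Fin 2) (Fin 2) ℤ_[ℓ]) :
    EDvd ℓ (m + 2) ((1 + (ℓ : ℤ_[ℓ]) ^ m • A) ^ ℓ - (1 + (ℓ : ℤ_[ℓ]) ^ (m + 1) • A)) := by
  have hp := Fact.out (p := ℓ.Prime)
  have hℓ2 : 2 ≤ ℓ := hp.two_le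
  set c : ℤ_[ℓ] := (ℓ : ℤ_[ℓ]) ^ m with hc
  set x : Matrix (Fin 2) (Fin 2) ℤ_[ℓ] := c • A with hx
  have hpow : (1 + x) ^ ℓ = ∑ k ∈ Finset.range (ℓ + 1),
      x ^ k * 1 ^ (ℓ - k) * (ℓ.choose k : Matrix (Fin 2) (Fin 2) ℤ_[ℓ]) := by
    rw [add_comm]
    exact (Commute.one_right x).add_pow ℓ
  rw [hpow, Finset.range_eq_Ico, Finset.sum_eq_sum_Ico_succ_bot (by omega),
    Finset.sum_eq_sum_Ico_succ_bot (by omega)]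
  have h0 : x ^ 0 * 1 ^ (ℓ - 0) * (ℓ.choose 0 : Matrix (Fin 2) (Fin 2) ℤ_[ℓ]) = 1 := by simp
  have h1 : x ^ 1 * 1 ^ (ℓ - 1) * (ℓ.choose 1 : Matrix (Fin 2) (Fin 2) ℤ_[ℓ])
      = (ℓ : ℤ_[ℓ]) ^ (m + 1) • A := by
    rw [pow_one, one_pow, mul_one, Nat.choose_one_right, hx, edvd_natCast_mul_smul, hc,
      ← pow_succ']
  rw [h0, h1]
  have heq : ∀ (a S : Matrix (Fin 2) (Fin 2) ℤ_[ℓ]), 1 + (a + S) - (1 + a) = S := by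
    intros; abel
  rw [heq]
  intro i j
  rw [Matrix.sum_apply]
  apply Finset.dvd_sum
  intro k hk
  rw [Finset.mem_Ico] at hk
  have hterm : x ^ k * 1 ^ (ℓ - k) * (ℓ.choose k : Matrix (Fin 2) (Fin 2) ℤ_[ℓ])
      = ((ℓ.choose k : ℤ_[ℓ]) * c ^ k) • A ^ k := by
    rw [one_pow, mul_one, hx, smul_pow, edvd_natCast_mul_smul]
  rw [hterm]
  have hdvd : (ℓ : ℤ_[ℓ]) ^ (m + 2) ∣ (ℓ.choose k : ℤ_[ℓ]) * c ^ k := by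
    rcases eq_or_lt_of_le (Nat.lt_succ_iff.mp hk.2) with heq | hkl
    · -- k = ℓ
      rw [heq, Nat.choose_self, Nat.cast_one, one_mul, hc, ← pow_mul]
      apply pow_dvd_pow
      rcases Nat.lt_or_ge ℓ 3 with h3 | h3
      · have : ℓ = 2 := by omega
        have := h2 this
        subst ‹ℓ = 2›
        omega
      · nlinarith [hm]
    · -- 2 ≤ k < ℓ, so ℓ ∣ choose
      have hdc : ℓ ∣ ℓ.choose k := hp.dvd_choose_self (by omega) hkl
      obtain ⟨t, ht⟩ := hdc
      rw [ht, Nat.cast_mul, hc, ← pow_mul, mul_comm ((ℓ:ℤ_[ℓ])) _, mul_assoc]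
      have : (ℓ : ℤ_[ℓ]) ^ (m + 2) ∣ (ℓ : ℤ_[ℓ]) * (ℓ:ℤ_[ℓ]) ^ (m * k) := by
        rw [← pow_succ']
        apply pow_dvd_pow
        nlinarith [hk.1, hm]
      exact this.mul_left _
  simpa using Dvd.dvd.mul_right hdvd ((A ^ k) i j)

theorem EDvd.neg {k : ℕ} {M : Matrix (Fin 2) (Fin 2) ℤ_[ℓ]} (hM : EDvd ℓ k M) :
    EDvd ℓ k (-M) := fun i j => by simpa using (hM i j).neg_right

theorem isUnit_det_one_add {M : Matrix (Fin 2) (Fin 2) ℤ_[ℓ]} (hM : EDvd ℓ 1 M) :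
    IsUnit (1 + M).det := by
  apply isUnit_of_toZModPow ℓ le_rfl
  rw [RingHom.map_det]
  have : (toZModPow (p := ℓ) 1).mapMatrix (1 + M) = 1 := by
    rw [_root_.map_add, _root_.map_one]
    have hz : (toZModPow (p := ℓ) 1).mapMatrix M = 0 := by
      ext i j
      exact (dvd_iff_toZModPow ℓ 1 (M i j)).mp (hM i j)
    rw [hz, add_zero]
  rw [this, Matrix.det_one]
  exact isUnit_one

theorem Kgl_step (G : Subgroup (GL (Fin 2) ℤ_[ℓ])) {m : ℕ} (hm : 1 ≤ m) (h2 : ℓ = 2 → 2 ≤ m)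
    (hstep : Kgl ℓ m ≤ G ⊔ Kgl ℓ (m + 1)) : Kgl ℓ (m + 1) ≤ G ⊔ Kgl ℓ (m + 2) := by
  intro x hx
  obtain ⟨A, hAeq⟩ := EDvd.exists_smul ℓ
    (show EDvd ℓ (m+1) ((x : Matrix (Fin 2) (Fin 2) ℤ_[ℓ]) - 1) from (mem_Kgl_iff ℓ _ x).mp hx)
  have hxval : (x : Matrix (Fin 2) (Fin 2) ℤ_[ℓ]) = 1 + (ℓ : ℤ_[ℓ]) ^ (m+1) • A := by
    rw [← hAeq]; abel
  -- the auxiliary unit y with y = 1 + ℓ^m • A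
  have hdet : IsUnit ((1 + (ℓ : ℤ_[ℓ]) ^ m • A : Matrix (Fin 2) (Fin 2) ℤ_[ℓ])).det :=
    isUnit_det_one_add ℓ (edvd_smul ℓ (pow_dvd_pow (ℓ:ℤ_[ℓ]) hm) A)
  obtain ⟨y, hy⟩ := (Matrix.isUnit_iff_isUnit_det _).mpr hdet
  have hyK : y ∈ Kgl ℓ m := by
    rw [mem_Kgl_iff]
    have : (y : Matrix (Fin 2) (Fin 2) ℤ_[ℓ]) - 1 = (ℓ : ℤ_[ℓ]) ^ m • A := by rw [hy]; abel
    rw [this]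
    exact edvd_smul ℓ dvd_rfl A
  -- decompose y = g * u
  have hy' : y ∈ (G : Set (GL (Fin 2) ℤ_[ℓ])) * (Kgl ℓ (m+1) : Set (GL (Fin 2) ℤ_[ℓ])) := by
    rw [← Subgroup.mul_normal]
    exact hstep hyK
  obtain ⟨g, hg, u, hu, hgu⟩ := Set.mem_mul.mp hy'
  -- g = y * u⁻¹, compute g.val = 1 + ℓ^m • D
  have hginv : g = y * u⁻¹ := by rw [← hgu]; group
  obtain ⟨C, hC⟩ := EDvd.exists_smul ℓ
    (show EDvd ℓ (m+1) (((u⁻¹ : GL (Fin 2) ℤ_[ℓ]) : Matrix (Fin 2) (Fin 2) ℤ_[ℓ]) - 1) from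
      (mem_Kgl_iff ℓ _ u⁻¹).mp (inv_mem hu))
  have huval : ((u⁻¹ : GL (Fin 2) ℤ_[ℓ]) : Matrix (Fin 2) (Fin 2) ℤ_[ℓ])
      = 1 + (ℓ : ℤ_[ℓ]) ^ (m+1) • C := by rw [← hC]; abel
  have hgval : (g : Matrix (Fin 2) (Fin 2) ℤ_[ℓ])
      = 1 + (ℓ : ℤ_[ℓ]) ^ m • A + (1 + (ℓ : ℤ_[ℓ]) ^ m • A) * ((ℓ : ℤ_[ℓ]) ^ (m+1) • C) := by
    rw [hginv, Units.val_mul, hy, huval]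
    noncomm_ring
  obtain ⟨C', hC'⟩ := EDvd.exists_smul ℓ
    (show EDvd ℓ (m+1) ((1 + (ℓ : ℤ_[ℓ]) ^ m • A) * ((ℓ : ℤ_[ℓ]) ^ (m+1) • C)) from
      EDvd.mul_left ℓ _ (edvd_smul ℓ dvd_rfl C))
  set D : Matrix (Fin 2) (Fin 2) ℤ_[ℓ] := A + (ℓ : ℤ_[ℓ]) • C' with hD
  have hgval' : (g : Matrix (Fin 2) (Fin 2) ℤ_[ℓ]) = 1 + (ℓ : ℤ_[ℓ]) ^ m • D := by
    rw [hgval, hC', hD, smul_add, smul_smul, ← pow_succ]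
    abel
  -- binomial computation
  have hb := binom_key ℓ hm h2 D
  rw [← hgval'] at hb
  have hkey : EDvd ℓ (m+2) (((g : Matrix (Fin 2) (Fin 2) ℤ_[ℓ])) ^ ℓ
      - (x : Matrix (Fin 2) (Fin 2) ℤ_[ℓ])) := by
    have hsplit : ((g : Matrix (Fin 2) (Fin 2) ℤ_[ℓ])) ^ ℓ - (x : Matrix (Fin 2) (Fin 2) ℤ_[ℓ])
        = (((g : Matrix (Fin 2) (Fin 2) ℤ_[ℓ])) ^ ℓ - (1 + (ℓ : ℤ_[ℓ]) ^ (m+1) • D))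
          + (ℓ : ℤ_[ℓ]) ^ (m+2) • C' := by
      rw [hxval, hD, smul_add, smul_smul, ← pow_succ]
      abel
    rw [hsplit]
    exact EDvd.add ℓ hb (edvd_smul ℓ dvd_rfl C')
  -- w := (g⁻¹)^ℓ * x lies in Kgl (m+2)
  have hwK : (g⁻¹) ^ ℓ * x ∈ Kgl ℓ (m+2) := by
    rw [mem_Kgl_iff]
    have hval : (((g⁻¹) ^ ℓ * x : GL (Fin 2) ℤ_[ℓ]) : Matrix (Fin 2) (Fin 2) ℤ_[ℓ]) - 1
        = ((g⁻¹ : GL (Fin 2) ℤ_[ℓ]) : Matrix (Fin 2) (Fin 2) ℤ_[ℓ]) ^ ℓ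
          * (-(((g : Matrix (Fin 2) (Fin 2) ℤ_[ℓ])) ^ ℓ
              - (x : Matrix (Fin 2) (Fin 2) ℤ_[ℓ]))) := by
      have h1 : ((g⁻¹ : GL (Fin 2) ℤ_[ℓ]) : Matrix (Fin 2) (Fin 2) ℤ_[ℓ]) ^ ℓ
          * ((g : Matrix (Fin 2) (Fin 2) ℤ_[ℓ])) ^ ℓ = 1 := by
        have : ((g⁻¹) ^ ℓ * g ^ ℓ : GL (Fin 2) ℤ_[ℓ]) = 1 := by group
        calc ((g⁻¹ : GL (Fin 2) ℤ_[ℓ]) : Matrix (Fin 2) (Fin 2) ℤ_[ℓ]) ^ ℓ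
            * ((g : Matrix (Fin 2) (Fin 2) ℤ_[ℓ])) ^ ℓ
            = (((g⁻¹) ^ ℓ * g ^ ℓ : GL (Fin 2) ℤ_[ℓ]) : Matrix (Fin 2) (Fin 2) ℤ_[ℓ]) := by
              rw [Units.val_mul, Units.val_pow_eq_pow_val, Units.val_pow_eq_pow_val]
          _ = 1 := by rw [this, Units.val_one]
      rw [Units.val_mul, Units.val_pow_eq_pow_val, mul_neg, mul_sub, h1]
      abel
    rw [hval]
    exact EDvd.mul_left ℓ _ (EDvd.neg ℓ hkey)
  -- conclude
  have hxdec : x = g ^ ℓ * ((g⁻¹) ^ ℓ * x) := by group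
  rw [hxdec]
  exact Subgroup.mul_mem _ (Subgroup.mem_sup_left (pow_mem hg ℓ))
    (Subgroup.mem_sup_right hwK)

theorem index_map_eq_sup (G : Subgroup (GL (Fin 2) ℤ_[ℓ])) (m : ℕ) (hm : 1 ≤ m) :
    (G.map (redGL ℓ m)).index = (G ⊔ Kgl ℓ m).index := by
  rw [Subgroup.index_map, MonoidHom.range_eq_top.mpr (redGL_surjective ℓ m hm),
    Subgroup.index_top, mul_one]

end SZ37

/-- Sutherland–Zywina Lemma 3.7: if the index of the image of an open subgroup
`G ≤ GL₂(ℤ_ℓ)` in `GL₂(ℤ/ℓ^{n+1})` equals its index in `GL₂(ℤ/ℓ^n)` (with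
`n ≥ 1`, and `n ≠ 1` if `ℓ = 2`), then `[GL₂(ℤ_ℓ) : G]` equals this index. -/
theorem stmt_10 (ℓ : ℕ) [Fact ℓ.Prime]
    (G : Subgroup (GL (Fin 2) ℤ_[ℓ])) (hG : IsOpen (G : Set (GL (Fin 2) ℤ_[ℓ])))
    (n : ℕ) (hn : 1 ≤ n) (hn2 : ℓ = 2 → n ≠ 1)
    (h : (G.map (Units.map
        ((PadicInt.toZModPow (p := ℓ) (n + 1)).mapMatrix.toMonoidHom))).index =
      (G.map (Units.map
        ((PadicInt.toZModPow (p := ℓ) n).mapMatrix.toMonoidHom))).index) :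
    G.index = (G.map (Units.map
      ((PadicInt.toZModPow (p := ℓ) n).mapMatrix.toMonoidHom))).index := by
  have hp := Fact.out (p := ℓ.Prime)
  have h' : (G ⊔ Kgl ℓ (n+1)).index = (G ⊔ Kgl ℓ n).index := by
    rw [← index_map_eq_sup ℓ G (n+1) (by omega), ← index_map_eq_sup ℓ G n hn]
    exact h
  have hfin : (G ⊔ Kgl ℓ n).index ≠ 0 := by
    rw [← index_map_eq_sup ℓ G n hn]
    haveI : NeZero (ℓ ^ n) := ⟨pow_ne_zero _ (by have := hp.two_le; omega)⟩
    exact Subgroup.index_ne_zero_of_finite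
  have hle : G ⊔ Kgl ℓ (n+1) ≤ G ⊔ Kgl ℓ n :=
    sup_le_sup_left (Kgl_antitone ℓ (by omega)) G
  have heq : G ⊔ Kgl ℓ (n+1) = G ⊔ Kgl ℓ n := by
    have hrel := Subgroup.relIndex_mul_index hle
    rw [h'] at hrel
    have hone : (G ⊔ Kgl ℓ (n+1)).relIndex (G ⊔ Kgl ℓ n) = 1 := by
      have := hfin
      rcases Nat.eq_zero_or_pos ((G ⊔ Kgl ℓ n).index) with h0 | hpos
      · exact absurd h0 this
      · exact Nat.eq_of_mul_eq_mul_right hpos (by rw [hrel, one_mul])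
    exact le_antisymm hle (Subgroup.relIndex_eq_one.mp hone)
  have hbase : Kgl ℓ n ≤ G ⊔ Kgl ℓ (n+1) := heq ▸ le_sup_right
  have hn2' : ∀ m, n ≤ m → (ℓ = 2 → 2 ≤ m) := by
    intro m hm he; have := hn2 he; omega
  have key : ∀ m, n ≤ m → (Kgl ℓ m ≤ G ⊔ Kgl ℓ (m+1) ∧ G ⊔ Kgl ℓ m = G ⊔ Kgl ℓ n) := by
    intro m hm
    induction m, hm using Nat.le_induction with
    | base => exact ⟨hbase, rfl⟩
    | succ m hm ih =>
      obtain ⟨ih1, ih2⟩ := ih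
      refine ⟨Kgl_step ℓ G (le_trans hn hm) (hn2' m hm) ih1, ?_⟩
      have hEq : G ⊔ Kgl ℓ (m+1) = G ⊔ Kgl ℓ m :=
        le_antisymm (sup_le_sup_left (Kgl_antitone ℓ (Nat.le_succ m)) G)
          (sup_le le_sup_left ih1)
      rw [hEq, ih2]
  obtain ⟨m₀, hm₀⟩ := exists_Kgl_le ℓ G hG
  have h1 : Kgl ℓ (max n m₀) ≤ G := le_trans (Kgl_antitone ℓ (le_max_right n m₀)) hm₀
  have h2 : G ⊔ Kgl ℓ (max n m₀) = G := sup_eq_left.mpr h1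
  have h3 := (key (max n m₀) (le_max_left n m₀)).2
  rw [index_map_eq_sup ℓ G n hn, ← h3, h2]
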